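/- For α ≥ 1, x ≥ 0, and 0 < y < 1, Σ_{n=0}^∞ G_{α+n}(x) y^n = (1-y)^{-1}(G_{α-1}(x) - y^{1-α} e^{(y-1)x} G_{α-1}(xy)), where G_0 := 1. -/

import Mathlib

open Real MeasureTheory intervalIntegral Set Finset

noncomputable def G (β x : ℝ) : ℝ :=
  if β = 0 then 1 else (1 / Real.Gamma β) * ∫ t in (0:ℝ)..x, Real.exp (-t) * t ^ (β - 1)

lemma gammaIntble {s x : ℝ} (hs : 0 < s) :
    IntervalIntegrable (fun t => Real.exp (-t) * t ^ (s - 1)) volume 0 x := by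
  apply (intervalIntegral.intervalIntegrable_rpow' (by linarith)).continuousOn_mul
  exact (Real.continuous_exp.comp continuous_neg).continuousOn

lemma G_eq {s x : ℝ} (hs : s ≠ 0) :
    G s x = (1 / Real.Gamma s) * ∫ t in (0:ℝ)..x, Real.exp (-t) * t ^ (s - 1) := by
  simp [G, hs]

lemma lemA {s x : ℝ} (hs : 0 ≤ s) (hx : 0 ≤ x) :
    G (s + 1) x = G s x - Real.exp (-x) * x ^ s / Real.Gamma (s + 1) := by
  rcases eq_or_lt_of_le hs with rfl | hs
  · have e1 : G (0 + 1) x = 1 - Real.exp (-x) := by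
      rw [G_eq (by norm_num : (0:ℝ)+1 ≠ 0)]
      have h1 : ∀ t ∈ Set.uIcc (0:ℝ) x, Real.exp (-t) * t ^ ((0:ℝ) + 1 - 1) = Real.exp (-t) := by
        intro t _; norm_num
      rw [intervalIntegral.integral_congr h1,
        intervalIntegral.integral_comp_neg (fun t => Real.exp t), integral_exp]
      norm_num [Real.Gamma_one]
    rw [e1]
    have : G 0 x = 1 := by simp [G]
    rw [this]
    norm_num [Real.Gamma_one]
  · have hs1 : (0:ℝ) < s + 1 := by linarith
    have key : ∫ t in (0:ℝ)..x, (Real.exp (-t) * t ^ s - s * (Real.exp (-t) * t ^ (s - 1)))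
        = -(Real.exp (-x) * x ^ s) - -(Real.exp (-0) * (0:ℝ) ^ s) := by
      apply intervalIntegral.integral_eq_sub_of_hasDerivAt_of_le hx
      · apply ContinuousOn.neg
        apply ((Real.continuous_exp.comp continuous_neg).continuousOn).mul
        exact fun t _ => (Real.continuousAt_rpow_const t s (Or.inr hs.le)).continuousWithinAt
      · intro t ht
        have hd1 : HasDerivAt (fun u : ℝ => Real.exp (-u)) (-Real.exp (-t)) t := by
          simpa [Function.comp_def] using (Real.hasDerivAt_exp (-t)).comp t (hasDerivAt_neg t)
        have hd2 : HasDerivAt (fun u : ℝ => u ^ s) (s * t ^ (s - 1)) t :=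
          Real.hasDerivAt_rpow_const (Or.inl (ne_of_gt ht.1))
        have := (hd1.mul hd2).neg
        convert this using 1
        · rfl
        rw [Real.exp_neg]
        ring
      · have h1 : IntervalIntegrable (fun t => Real.exp (-t) * t ^ s) volume 0 x := by
          simpa using gammaIntble (x := x) hs1
        exact h1.sub ((gammaIntble hs).const_mul s)
    rw [intervalIntegral.integral_sub (by simpa using gammaIntble (x := x) hs1)
      ((gammaIntble hs).const_mul s), intervalIntegral.integral_const_mul] at key
    have hI : (∫ t in (0:ℝ)..x, Real.exp (-t) * t ^ (s + 1 - 1))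
        = s * (∫ t in (0:ℝ)..x, Real.exp (-t) * t ^ (s - 1)) - Real.exp (-x) * x ^ s := by
      have h0 : (0:ℝ) ^ s = 0 := Real.zero_rpow hs.ne'
      have : (∫ t in (0:ℝ)..x, Real.exp (-t) * t ^ (s + 1 - 1))
          = ∫ t in (0:ℝ)..x, Real.exp (-t) * t ^ s := by norm_num
      rw [this]
      rw [h0] at key
      linarith [key]
    rw [G_eq (by linarith : s + 1 ≠ 0), G_eq hs.ne', hI,
      Real.Gamma_add_one hs.ne']
    have hΓ : Real.Gamma s ≠ 0 := (Real.Gamma_pos_of_pos hs).ne'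
    field_simp

lemma polyIntble {r z : ℝ} (k : ℕ) (hr : -1 < r) :
    IntervalIntegrable (fun t => t ^ r * (z - t) ^ k) volume 0 z := by
  apply (intervalIntegral.intervalIntegrable_rpow' hr).mul_continuousOn
  exact (Continuous.pow (by continuity) k).continuousOn

lemma lemBeta (k : ℕ) : ∀ {s z : ℝ}, 0 < s → 0 < z →
    (∫ t in (0:ℝ)..z, t ^ (s - 1) * (z - t) ^ k)
      = z ^ s * z ^ k * ((Nat.factorial k : ℕ) : ℝ) * Real.Gamma s / Real.Gamma (s + k + 1) := by
  induction k with
  | zero =>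
    intro s z hs hz
    simp only [pow_zero, mul_one, Nat.factorial_zero, Nat.cast_one, Nat.cast_zero, add_zero]
    rw [integral_rpow (Or.inl (by linarith))]
    rw [Real.Gamma_add_one hs.ne']
    rw [Real.zero_rpow (by linarith : s - 1 + 1 ≠ 0)]
    have hΓ : Real.Gamma s ≠ 0 := (Real.Gamma_pos_of_pos hs).ne'
    field_simp
    ring_nf
    field_simp
  | succ k ih =>
    intro s z hs hz
    have key : ∫ t in (0:ℝ)..z,
        (t ^ (s - 1) * (z - t) ^ (k + 1) - ((k + 1 : ℝ) / s) * (t ^ ((s+1) - 1) * (z - t) ^ k))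
        = (z ^ s / s * (z - z) ^ (k + 1)) - ((0:ℝ) ^ s / s * (z - 0) ^ (k + 1)) := by
      apply intervalIntegral.integral_eq_sub_of_hasDerivAt_of_le
        (f := fun u => u ^ s / s * (z - u) ^ (k+1)) hz.le
      · apply ContinuousOn.mul
        · exact ContinuousOn.div_const (fun t _ =>
            (Real.continuousAt_rpow_const t s (Or.inr hs.le)).continuousWithinAt) s
        · exact ((Continuous.pow (by continuity) (k+1)).continuousOn)
      · intro t ht
        have hd2 : HasDerivAt (fun u : ℝ => u ^ s / s) (t ^ (s - 1)) t := by
          have := (Real.hasDerivAt_rpow_const (p := s) (Or.inl (ne_of_gt ht.1))).div_const s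
          simpa [mul_comm, mul_div_assoc, mul_div_cancel_left₀ _ hs.ne'] using this
        have hd3 : HasDerivAt (fun u : ℝ => (z - u) ^ (k + 1))
            (-((k + 1 : ℝ) * (z - t) ^ k)) t := by
          have h := (hasDerivAt_pow (k+1) (z - t)).comp t
            ((hasDerivAt_const t z).sub (hasDerivAt_id t))
          simpa [mul_comm, Function.comp_def] using h
        have := hd2.mul hd3
        convert this using 1
        · rfl
        · rfl
        push_cast
        rw [show s + 1 - 1 = s by ring, Real.rpow_sub ht.1, Real.rpow_one]
        field_simp
        ring
      · exact (polyIntble (k+1) (by linarith)).sub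
          (((polyIntble k (by linarith : (-1:ℝ) < (s+1)-1)).const_mul _))
    rw [intervalIntegral.integral_sub (polyIntble (k+1) (by linarith))
      (((polyIntble k (by linarith : (-1:ℝ) < (s+1)-1)).const_mul _)),
      intervalIntegral.integral_const_mul, ih (by linarith) hz] at key
    rw [Real.zero_rpow hs.ne', sub_self, zero_pow (Nat.succ_ne_zero k)] at key
    have hΓ : Real.Gamma (s + (k+1) + 1) = (s + k + 1) * Real.Gamma (s + k + 1) := by
      rw [show s + ((k:ℝ)+1) + 1 = (s + k + 1) + 1 by push_cast; ring,
        Real.Gamma_add_one (by positivity)]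
    have hΓ2 : Real.Gamma (s + 1 + k + 1) = Real.Gamma (s + (k+1) + 1) := by
      norm_num; ring_nf
    have hΓpos : (0:ℝ) < Real.Gamma (s + k + 1) := Real.Gamma_pos_of_pos (by positivity)
    have hz1 : z ^ (s + 1) = z ^ s * z := by
      rw [Real.rpow_add hz, Real.rpow_one]
    rw [hΓ2, hΓ, Real.Gamma_add_one hs.ne', hz1] at key
    have hI : (∫ t in (0:ℝ)..z, t ^ (s-1) * (z - t) ^ (k+1))
        = ((k+1:ℝ)/s) * (z ^ s * z * z ^ k * (Nat.factorial k : ℝ) * (s * Real.Gamma s) /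
          ((s + k + 1) * Real.Gamma (s + k + 1))) := by
      simp only [mul_zero, zero_div, zero_mul, sub_zero] at key
      linarith
    rw [hI]
    push_cast [Nat.factorial_succ]
    rw [hΓ]
    have h1 : (s + (k:ℝ) + 1) ≠ 0 := by positivity
    have h2 : Real.Gamma (s + k + 1) ≠ 0 := hΓpos.ne'
    field_simp
    ring

lemma expHasSum (z : ℝ) : HasSum (fun n : ℕ => z ^ n / (Nat.factorial n : ℝ)) (Real.exp z) := by
  rw [Real.exp_eq_exp_ℝ]
  exact NormedSpace.expSeries_div_hasSum_exp z

lemma lemB {s z : ℝ} (hs : 0 ≤ s) (hz : 0 < z) :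
    HasSum (fun k : ℕ => Real.exp (-z) * z ^ s * z ^ k / Real.Gamma (s + k + 1)) (G s z) := by
  rcases eq_or_lt_of_le hs with rfl | hs
  · have h := (expHasSum z).mul_left (Real.exp (-z))
    rw [← Real.exp_add, neg_add_cancel, Real.exp_zero] at h
    have : G 0 z = 1 := by simp [G]
    rw [this]
    convert h using 2 with k
    · rfl
    rw [Real.rpow_zero, show (0:ℝ) + k + 1 = ((k:ℝ) + 1) by ring,
      Real.Gamma_nat_eq_factorial]
    ring
  · -- pointwise sum identity
    have hpt : ∀ t : ℝ, HasSum
        (fun k : ℕ => Real.exp (-z) / (Nat.factorial k : ℝ) * (t ^ (s-1) * (z - t) ^ k))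
        (Real.exp (-t) * t ^ (s-1)) := by
      intro t
      have h := (expHasSum (z - t)).mul_left (Real.exp (-z) * t ^ (s-1))
      rw [show Real.exp (-z) * t ^ (s-1) * Real.exp (z - t)
          = Real.exp (-t) * t ^ (s-1) by
        rw [mul_right_comm, ← Real.exp_add, show -z + (z - t) = -t by ring]] at h
      convert h using 2 with k
      · rfl
      ring
    have hint : HasSum
        (fun k : ℕ => ∫ t in (0:ℝ)..z,
          Real.exp (-z) / (Nat.factorial k : ℝ) * (t ^ (s-1) * (z - t) ^ k))
        (∫ t in (0:ℝ)..z, Real.exp (-t) * t ^ (s-1)) := by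
      apply intervalIntegral.hasSum_integral_of_dominated_convergence
        (bound := fun k t => Real.exp (-z) / (Nat.factorial k : ℝ) * (t ^ (s-1) * (z - t) ^ k))
      · intro k
        rw [Set.uIoc_of_le hz.le]
        apply ContinuousOn.aestronglyMeasurable ?_ measurableSet_Ioc
        apply ContinuousOn.mul continuousOn_const
        apply ContinuousOn.mul
        · exact fun t ht =>
            (Real.continuousAt_rpow_const t (s-1) (Or.inl (ne_of_gt ht.1))).continuousWithinAt
        · exact ((continuous_const.sub continuous_id).pow k).continuousOn
      · intro k
        filter_upwards with t ht
        rw [Set.uIoc_of_le hz.le] at ht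
        have h1 : (0:ℝ) ≤ t ^ (s-1) := Real.rpow_nonneg ht.1.le _
        have h2 : (0:ℝ) ≤ (z - t) ^ k := pow_nonneg (by linarith [ht.2]) _
        rw [Real.norm_eq_abs, abs_of_nonneg (by positivity)]
      · filter_upwards with t _
        exact (hpt t).summable
      · have he : (fun t => ∑' k : ℕ,
            Real.exp (-z) / (Nat.factorial k : ℝ) * (t ^ (s-1) * (z - t) ^ k))
            = fun t => Real.exp (-t) * t ^ (s-1) := by
          funext t; exact (hpt t).tsum_eq
        rw [he]
        exact gammaIntble hs
      · filter_upwards with t _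
        exact hpt t
    have hΓs : Real.Gamma s ≠ 0 := (Real.Gamma_pos_of_pos hs).ne'
    have h2 := hint.div_const (Real.Gamma s)
    rw [G_eq hs.ne']
    convert h2 using 1
    · rfl
    · funext k
      rw [intervalIntegral.integral_const_mul, lemBeta k hs hz]
      have hΓk : Real.Gamma (s + k + 1) ≠ 0 := (Real.Gamma_pos_of_pos (by positivity)).ne'
      have hf : (Nat.factorial k : ℝ) ≠ 0 := Nat.cast_ne_zero.mpr (Nat.factorial_ne_zero k)
      field_simp
    · ring

lemma telescope {α x : ℝ} (hα : 1 ≤ α) (hx : 0 < x) (n : ℕ) :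
    G (α + n) x = G (α - 1) x - ∑ k ∈ Finset.range (n + 1),
      Real.exp (-x) * x ^ (α - 1) * x ^ k / Real.Gamma (α + k) := by
  have step : ∀ k : ℕ, G (α + k) x
      = G (α - 1 + k) x - Real.exp (-x) * x ^ (α - 1) * x ^ k / Real.Gamma (α + k) := by
    intro k
    have hk : (0:ℝ) ≤ k := Nat.cast_nonneg k
    have h := lemA (s := α - 1 + k) (by linarith) hx.le
    rw [show α - 1 + (k:ℝ) + 1 = α + k by ring] at h
    rw [h, Real.rpow_add hx, Real.rpow_natCast]
    ring
  induction n with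
  | zero =>
    simpa using step 0
  | succ n ih =>
    have h1 := step (n+1)
    rw [show ((n+1 : ℕ) : ℝ) = (n:ℝ) + 1 from by push_cast; ring,
      show α - 1 + ((n:ℝ) + 1) = α + n by ring] at h1
    push_cast
    rw [h1, ih, Finset.sum_range_succ _ (n+1)]
    push_cast
    ring

theorem stmt_4 (α x y : ℝ) (hα : 1 ≤ α) (hx : 0 ≤ x) (hy0 : 0 < y) (hy1 : y < 1) :
    HasSum (fun n : ℕ => G (α + n) x * y ^ n)
      ((1 - y)⁻¹ * (G (α - 1) x - y ^ (1 - α) * Real.exp ((y - 1) * x) * G (α - 1) (x * y))) := by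
  rcases eq_or_lt_of_le hx with rfl | hx
  · -- x = 0
    have hterm : (fun n : ℕ => G (α + n) (0:ℝ) * y ^ n) = fun _ => (0:ℝ) := by
      funext n
      rw [G_eq (by positivity : α + (n:ℝ) ≠ 0), intervalIntegral.integral_same]
      ring
    rw [hterm]
    have hval : G (α - 1) 0 - y ^ (1 - α) * Real.exp ((y - 1) * 0) * G (α - 1) ((0:ℝ) * y) = 0 := by
      rcases eq_or_lt_of_le hα with rfl | hα1
      · norm_num [G]
      · rw [zero_mul, G_eq (by intro h; nlinarith [h] : α - 1 ≠ 0),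
          intervalIntegral.integral_same]
        ring
    rw [hval, mul_zero]
    exact hasSum_zero
  · -- x > 0
    have hα0 : (0:ℝ) ≤ α - 1 := by linarith
    set c : ℕ → ℝ := fun k => Real.exp (-x) * x ^ (α - 1) * x ^ k / Real.Gamma (α + k) with hc
    have hcnn : ∀ k, 0 ≤ c k := by
      intro k
      have h1 : (0:ℝ) < Real.Gamma (α + k) := Real.Gamma_pos_of_pos (by positivity)
      have hxp : (0:ℝ) ≤ x ^ (α-1) := Real.rpow_nonneg hx.le _
      rw [hc]
      positivity
    have hxy : 0 < x * y := by positivity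
    have hB := lemB (s := α - 1) hα0 hxy
    have e1 : y ^ (1-α) * y ^ (α-1) = 1 := by
      rw [← Real.rpow_add hy0]; norm_num
    have e2 : Real.exp (x*y - x) * Real.exp (-(x*y)) = Real.exp (-x) := by
      rw [← Real.exp_add]; ring_nf
    have h2 : HasSum (fun k : ℕ => c k * y ^ k)
        (y ^ (1 - α) * Real.exp ((y - 1) * x) * G (α - 1) (x * y)) := by
      have h := hB.mul_left (Real.exp (x * y - x) * y ^ (1 - α))
      convert h using 1
      · rfl
      · funext k
        rw [show α - 1 + (k:ℝ) + 1 = α + k by ring, Real.mul_rpow hx.le hy0.le, mul_pow]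
        rw [show Real.exp (x*y - x) * y ^ (1-α) *
            (Real.exp (-(x*y)) * (x ^ (α-1) * y ^ (α-1)) * (x^k * y^k) / Real.Gamma (α+k))
            = (Real.exp (x*y - x) * Real.exp (-(x*y))) * (y ^ (1-α) * y ^ (α-1)) *
              (x ^ (α-1) * x^k * y^k / Real.Gamma (α+k)) from by ring, e2, e1, hc]
        ring
      · rw [show x*y - x = (y-1)*x by ring]
        ring
    -- geometric series
    have h3 : HasSum (fun m : ℕ => y ^ m) (1 - y)⁻¹ :=
      hasSum_geometric_of_lt_one hy0.le hy1
    -- Cauchy product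
    have hf : Summable fun k => ‖c k * y ^ k‖ := by
      apply h2.summable.abs.congr
      intro k
      rw [Real.norm_eq_abs]
    have hg : Summable fun m => ‖y ^ m‖ := by
      apply h3.summable.abs.congr
      intro k
      rw [Real.norm_eq_abs]
    have h4 := hasSum_sum_range_mul_of_summable_norm hf hg
    rw [h2.tsum_eq, h3.tsum_eq] at h4
    have h5 : HasSum (fun n : ℕ => (∑ k ∈ Finset.range (n+1), c k) * y ^ n)
        (y ^ (1 - α) * Real.exp ((y - 1) * x) * G (α - 1) (x * y) * (1 - y)⁻¹) := by
      have he : (fun n : ℕ => ∑ k ∈ Finset.range (n+1), c k * y ^ k * y ^ (n-k))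
          = fun n => (∑ k ∈ Finset.range (n+1), c k) * y ^ n := by
        funext n
        rw [Finset.sum_mul]
        apply Finset.sum_congr rfl
        intro k hk
        rw [mul_assoc, ← pow_add,
          Nat.add_sub_cancel' (Nat.lt_succ_iff.mp (Finset.mem_range.mp hk))]
      rwa [he] at h4
    have h6 := (h3.mul_left (G (α-1) x)).sub h5
    convert h6 using 1
    · rfl
    · funext n
      rw [telescope hα hx n]
      ring
    · ring
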